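/- Let x(y,z,v) denote the unique minimizer of F(·,y,z,v) over the convex compact set X. Then x(y,z,v) is σ₂-Lipschitz in z with σ₂ = r₁/(r₁ − L_x): that is, ‖x(y,z',v) − x(y,z,v)‖ ≤ σ₂‖z'−z‖ for all z, z' ∈ ℝⁿ. -/

import Mathlib

open scoped RealInnerProductSpace

/-- Variational inequality for a minimizer of a differentiable function on a convex set. -/
lemma varIneq {E : Type*} [NormedAddCommGroup E] [InnerProductSpace ℝ E]
    (φ : E → ℝ) (Φ : E →L[ℝ] ℝ) (X : Set E) (hX : Convex ℝ X) {a u : E}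
    (ha : a ∈ X) (hu : u ∈ X) (hmin : IsMinOn φ X a) (hΦ : HasFDerivAt φ Φ a) :
    0 ≤ Φ (u - a) := by
  have hseg : segment ℝ a u ⊆ X := hX.segment_subset ha hu
  have hcone := sub_mem_posTangentConeAt_of_segment_subset hseg
  exact hmin.localize.hasFDerivWithinAt_nonneg hΦ.hasFDerivWithinAt hcone

/-- VI for the proximal objective. -/
lemma keyVI {E : Type*} [NormedAddCommGroup E] [InnerProductSpace ℝ E] [CompleteSpace E]
    (φ : E → ℝ) (G : E) (r₁ c : ℝ) (z : E) (X : Set E) (hX : Convex ℝ X) {a u : E}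
    (ha : a ∈ X) (hu : u ∈ X)
    (hmin : IsMinOn (fun x => φ x + r₁ / 2 * ‖x - z‖ ^ 2 - c) X a)
    (hG : HasGradientAt φ G a) :
    0 ≤ ⟪G, u - a⟫ + r₁ * ⟪a - z, u - a⟫ := by
  have hsub : HasFDerivAt (fun x : E => x - z) (ContinuousLinearMap.id ℝ E) a :=
    (hasFDerivAt_id a).sub_const z
  have hinner := (hsub.inner ℝ hsub).const_mul (r₁ / 2)
  have hφ : HasFDerivAt φ (InnerProductSpace.toDual ℝ E G) a := hG.hasFDerivAt
  have htot := (hφ.add hinner).sub_const c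
  have hnorm : (fun x : E => φ x + r₁ / 2 * ⟪x - z, x - z⟫ - c)
      = fun x : E => φ x + r₁ / 2 * ‖x - z‖ ^ 2 - c := by
    funext x; rw [real_inner_self_eq_norm_sq]
  change HasFDerivAt (fun x : E => φ x + r₁ / 2 * ⟪x - z, x - z⟫ - c) _ a at htot
  rw [hnorm] at htot
  have := varIneq _ _ X hX ha hu hmin htot
  simpa [fderivInnerCLM_apply, InnerProductSpace.toDual_apply_apply, real_inner_comm (a - z),
    mul_add, mul_comm, ← two_mul, mul_assoc, div_mul_eq_mul_div, mul_div_assoc] using this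

/-- the minimizer `x(y,z,v)` of `F(·,y,z,v)` over the compact
convex set `X` is `σ₂`-Lipschitz in `z` with `σ₂ = r₁/(r₁ − L_x)`. -/
theorem stmt_3
    {E D : Type*} [NormedAddCommGroup E] [InnerProductSpace ℝ E] [CompleteSpace E]
    [NormedAddCommGroup D] [InnerProductSpace ℝ D] [CompleteSpace D]
    (f : E → D → ℝ) (gx : E → D → E) (gy : E → D → D) (Lx Ly r₁ r₂ : ℝ)
    (hr₁ : r₁ > Lx) (hr₂ : r₂ > 0)
    (X : Set E) (Y : Set D)
    (hXc : IsCompact X) (hXconv : Convex ℝ X) (hXne : X.Nonempty)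
    (hYc : IsCompact Y) (hYconv : Convex ℝ Y) (hYne : Y.Nonempty)
    (hgradx : ∀ x y, HasGradientAt (fun x' => f x' y) (gx x y) x)
    (hgrady : ∀ x y, HasGradientAt (fun y' => f x y') (gy x y) y)
    (hLipx : ∀ x x' y y', ‖gx x y - gx x' y'‖ ≤ Lx * (‖x - x'‖ + ‖y - y'‖))
    (hLipy : ∀ x x' y y', ‖gy x y - gy x' y'‖ ≤ Ly * (‖x - x'‖ + ‖y - y'‖))
    (F : E → D → E → D → ℝ)
    (hF : ∀ x y z v, F x y z v
      = f x y + r₁ / 2 * ‖x - z‖ ^ 2 - r₂ / 2 * ‖y - v‖ ^ 2)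
    (xm : D → E → D → E)
    (hxm : ∀ y z v, xm y z v ∈ X ∧ IsMinOn (fun x => F x y z v) X (xm y z v)) :
    ∀ y ∈ Y, ∀ (z z' : E) (v : D),
      ‖xm y z' v - xm y z v‖ ≤ r₁ / (r₁ - Lx) * ‖z' - z‖ := by
  intro y _ z z' v
  by_cases hzz : z' = z
  · subst hzz; simp
  obtain ⟨ha, hmina⟩ := hxm y z v
  obtain ⟨hb, hminb⟩ := hxm y z' v
  have hFz : (fun x => F x y z v) = fun x => f x y + r₁ / 2 * ‖x - z‖ ^ 2
      - r₂ / 2 * ‖y - v‖ ^ 2 := funext fun x => hF x y z v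
  have hFz' : (fun x => F x y z' v) = fun x => f x y + r₁ / 2 * ‖x - z'‖ ^ 2
      - r₂ / 2 * ‖y - v‖ ^ 2 := funext fun x => hF x y z' v
  rw [hFz] at hmina
  rw [hFz'] at hminb
  have h1 := keyVI (fun x => f x y) (gx (xm y z v) y) r₁ (r₂ / 2 * ‖y - v‖ ^ 2) z X hXconv
    ha hb hmina (hgradx (xm y z v) y)
  have h2 := keyVI (fun x => f x y) (gx (xm y z' v) y) r₁ (r₂ / 2 * ‖y - v‖ ^ 2) z' X hXconv
    hb ha hminb (hgradx (xm y z' v) y)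
  set a := xm y z v with ha_def
  set b := xm y z' v with hb_def
  have hab : a - b = -(b - a) := by abel
  rw [hab, inner_neg_right, inner_neg_right] at h2
  -- Lipschitz bound on the gradient difference
  have hLip : ‖gx a y - gx b y‖ ≤ Lx * ‖b - a‖ := by
    have := hLipx a b y y
    simpa [norm_sub_rev b a] using this
  have hCS1 : ⟪gx a y - gx b y, b - a⟫ ≤ Lx * ‖b - a‖ * ‖b - a‖ :=
    le_trans (real_inner_le_norm _ _) (by nlinarith [norm_nonneg (b - a)])
  have hCS2 : ⟪z' - z, b - a⟫ ≤ ‖z' - z‖ * ‖b - a‖ := real_inner_le_norm _ _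
  -- combine
  have hdiff : ⟪a - z, b - a⟫ - ⟪b - z', b - a⟫ = ⟪z' - z, b - a⟫ - ⟪b - a, b - a⟫ := by
    rw [← inner_sub_left, ← inner_sub_left]
    congr 1
    abel
  have hsum : r₁ * (⟪b - a, b - a⟫ - ⟪z' - z, b - a⟫) ≤ ⟪gx a y - gx b y, b - a⟫ := by
    have h3 := add_nonneg h1 h2
    have e1 : ⟪gx a y - gx b y, b - a⟫ = ⟪gx a y, b - a⟫ - ⟪gx b y, b - a⟫ :=
      inner_sub_left _ _ _
    have hdiff2 : r₁ * (⟪a - z, b - a⟫ - ⟪b - z', b - a⟫)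
        = r₁ * (⟪z' - z, b - a⟫ - ⟪b - a, b - a⟫) := by rw [hdiff]
    have e2 : r₁ * (⟪a - z, b - a⟫ - ⟪b - z', b - a⟫)
        = r₁ * ⟪a - z, b - a⟫ + r₁ * -⟪b - z', b - a⟫ := by ring
    have e3 : r₁ * (⟪z' - z, b - a⟫ - ⟪b - a, b - a⟫)
        = r₁ * ⟪z' - z, b - a⟫ - r₁ * ⟪b - a, b - a⟫ := by ring
    have e4 : r₁ * (⟪b - a, b - a⟫ - ⟪z' - z, b - a⟫)
        = r₁ * ⟪b - a, b - a⟫ - r₁ * ⟪z' - z, b - a⟫ := by ring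
    rw [e2, e3] at hdiff2
    rw [e4, e1]
    linarith [h3, hdiff2]
  have huu : ⟪b - a, b - a⟫ = ‖b - a‖ ^ 2 := real_inner_self_eq_norm_sq (b - a)
  have hr₁pos : 0 < r₁ := by
    have h0 : 0 < ‖z - z'‖ := by
      rw [norm_sub_pos_iff]; exact Ne.symm hzz
    have h4 := hLipx z z' y y
    simp only [sub_self, norm_zero, add_zero] at h4
    have hL0 : 0 ≤ Lx := by
      nlinarith [norm_nonneg (gx z y - gx z' y), h0, h4]
    linarith
  have hkey : (r₁ - Lx) * ‖b - a‖ ^ 2 ≤ r₁ * (‖z' - z‖ * ‖b - a‖) := by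
    nlinarith [hsum, hCS1, hCS2, huu]
  have hpos : 0 < r₁ - Lx := by linarith
  rw [show (r₁ / (r₁ - Lx) * ‖z' - z‖) = r₁ * ‖z' - z‖ / (r₁ - Lx) by ring,
    le_div_iff₀ hpos]
  rcases eq_or_lt_of_le (norm_nonneg (b - a)) with h0 | h0
  · rw [← h0]
    have := mul_nonneg hr₁pos.le (norm_nonneg (z' - z))
    linarith
  · nlinarith [hkey, h0]
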